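/- For the Saito–Saitoh map F(x,y) = (xy, y(1+x)/(1+xy)) restricted to the curve C_h = {y(1+x) = h} with parametrization P_h(t) = (t, h/(t+1)), one has P_h^{-1} ∘ F ∘ P_h(t) = h t/(t+1), i.e. F(P_h(t)) = P_h(h t/(t+1)) for all t with t ≠ -1, t+1+ht ≠ 0 (so that the expressions are defined). -/

import Mathlib

/-- For the Saito–Saitoh map `F` and the parametrization `P_h(t) = (t, h/(t+1))` of the
curve `y(1+x) = h`, one has `F(P_h(t)) = P_h(ht/(t+1))`. -/
theorem saito_moebius (h t : ℂ) (ht : t + 1 ≠ 0) (ht2 : t + 1 + h * t ≠ 0) :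
    ((t * (h / (t + 1)), (h / (t + 1)) * (1 + t) / (1 + t * (h / (t + 1)))) : ℂ × ℂ) =
      (h * t / (t + 1), h / (h * t / (t + 1) + 1)) := by
  have h1 : (1 : ℂ) + t * (h / (t + 1)) ≠ 0 := by
    rw [ne_eq, ← sub_eq_zero]
    field_simp
    intro hc
    apply ht2
    linear_combination hc
  have h2 : h * t / (t + 1) + 1 ≠ 0 := by
    rw [ne_eq, ← sub_eq_zero]
    field_simp
    intro hc
    apply ht2
    linear_combination hc
  refine Prod.ext ?_ ?_ <;> simp only
  · ring
  · have h3 : h * t + (t + 1) ≠ 0 := by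
      intro hc
      apply ht2
      linear_combination hc
    field_simp
    ring
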